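/- Let p, q ≥ 1 be integers, let S = {0,1,...,m−1} with m ≥ 2, let φ : S^p ⇀ S^q be a partial function, let S̃ = {0,1,...,m̃−1} with S ⊆ S̃ (so m̃ ≥ m), and let r > q be an integer satisfying m^p ≤ m̃^{r−q} (equivalently, p·log m ≤ (r−q)·log m̃). Then for every s₀ ∈ S there exists a bijection φ̃ : S̃^r → S̃^r such that for every x ∈ dom(φ), the first q coordinates of φ̃(x, s₀, s₀, ..., s₀) (where the input x ∈ S^p is padded with r − p copies of s₀) equal φ(x); that is, φ̃(x, s₀,...,s₀) = (φ(x), y_x) for some y_x ∈ S̃^{r−q}. -/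

import Mathlib

/-- Extension lemma (via Hall's SDR theorem): given a partial function `φ : S^p ⇀ S^q`
with `S = {0,…,m−1} ⊆ S̃ = {0,…,m̃−1}`, and `r > q` with `m^p ≤ m̃^(r−q)` (and `p ≤ r`, so
that padding makes sense), for every `s₀ ∈ S` there is a bijection `φ̃ : S̃^r → S̃^r` such
that for every `x` in the domain of `φ`, the first `q` coordinates of
`φ̃(x, s₀, …, s₀)` equal `φ(x)`. -/
theorem statement14 (p q m mt r : ℕ) (hp : 1 ≤ p) (hq : 1 ≤ q) (hm : 2 ≤ m)
    (hmmt : m ≤ mt) (hqr : q < r) (hpr : p ≤ r)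
    (hsize : m ^ p ≤ mt ^ (r - q))
    (φ : (Fin p → Fin m) → Option (Fin q → Fin m)) (s₀ : Fin m) :
    ∃ φt : (Fin r → Fin mt) → (Fin r → Fin mt),
      Function.Bijective φt ∧
      ∀ (x : Fin p → Fin m) (b : Fin q → Fin m), φ x = some b →
        ∀ j : Fin q,
          φt (fun i : Fin r =>
              if h : (i : ℕ) < p then Fin.castLE hmmt (x ⟨(i : ℕ), h⟩)
              else Fin.castLE hmmt s₀)
            (Fin.castLE hqr.le j) = Fin.castLE hmmt (b j) := by
  classical
  set T := Fin r → Fin mt with hT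
  -- an injection encoding x into the last r-q coordinates
  obtain ⟨enc⟩ : Nonempty ((Fin p → Fin m) ↪ (Fin (r - q) → Fin mt)) := by
    apply Function.Embedding.nonempty_of_card_le
    simpa using hsize
  set D := {x : Fin p → Fin m // (φ x).isSome} with hD
  -- padding map
  let pad : (Fin p → Fin m) → T := fun x i =>
    if h : (i : ℕ) < p then Fin.castLE hmmt (x ⟨(i : ℕ), h⟩) else Fin.castLE hmmt s₀
  have pad_inj : Function.Injective pad := by
    intro x y hxy
    funext i
    have hir : (i : ℕ) < r := lt_of_lt_of_le i.2 hpr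
    have := congrFun hxy ⟨i, hir⟩
    simp only [pad, dif_pos i.2] at this
    exact Fin.castLE_injective hmmt (by simpa using this)
  -- desired output map
  let out : D → T := fun x i =>
    if h : (i : ℕ) < q then Fin.castLE hmmt ((φ x.1).get x.2 ⟨(i : ℕ), h⟩)
    else enc x.1 ⟨(i : ℕ) - q, by omega⟩
  have out_inj : Function.Injective out := by
    intro x y hxy
    have : enc x.1 = enc y.1 := by
      funext k
      have hkr : (k : ℕ) + q < r := by omega
      have := congrFun hxy ⟨(k : ℕ) + q, hkr⟩
      simp only [out, dif_neg (by omega : ¬ (k : ℕ) + q < q)] at this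
      simpa using this
    exact Subtype.ext (enc.injective this)
  let padE : D ↪ T := ⟨fun x => pad x.1, fun a b h => Subtype.ext (pad_inj h)⟩
  let outE : D ↪ T := ⟨out, out_inj⟩
  have hcardc : Fintype.card ↥(Set.range padE)ᶜ = Fintype.card ↥(Set.range outE)ᶜ := by
    rw [Fintype.card_compl_set, Fintype.card_compl_set,
      Set.card_range_of_injective padE.injective, Set.card_range_of_injective outE.injective]
  let compl : ↥(Set.range padE)ᶜ ≃ ↥(Set.range outE)ᶜ := Fintype.equivOfCardEq hcardc
  let eP : D ≃ Set.range padE := Equiv.ofInjective padE padE.injective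
  let eO : D ≃ Set.range outE := Equiv.ofInjective outE outE.injective
  let σ : T ≃ T :=
    (Equiv.Set.sumCompl (Set.range (padE : D → T))).symm.trans
      ((Equiv.sumCongr (eP.symm.trans eO) compl).trans
        (Equiv.Set.sumCompl (Set.range (outE : D → T))))
  refine ⟨σ, σ.bijective, ?_⟩
  intro x b hb j
  have hxs : (φ x).isSome := by rw [hb]; rfl
  set xd : D := ⟨x, hxs⟩ with hxd
  have key : σ (padE xd) = out xd := by
    have h1 : (Equiv.Set.sumCompl (Set.range (padE : D → T))).symm (padE xd)
        = Sum.inl ⟨padE xd, Set.mem_range_self xd⟩ :=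
      Equiv.Set.sumCompl_symm_apply_of_mem _
    simp only [σ, Equiv.trans_apply, h1, Equiv.sumCongr_apply, Sum.map_inl]
    have h2 : eP.symm ⟨padE xd, Set.mem_range_self xd⟩ = xd :=
      eP.symm_apply_eq.mpr (Subtype.ext rfl)
    rw [h2]
    rfl
  have : σ (padE xd) (Fin.castLE hqr.le j) = out xd (Fin.castLE hqr.le j) := by rw [key]
  have hbg : (φ x).get hxs = b := by simp [hb]
  have hje : out xd (Fin.castLE hqr.le j) = Fin.castLE hmmt (b j) := by
    simp only [out, Fin.coe_castLE, dif_pos j.2, hbg]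
    congr 1
    rw [← hbg]
  rw [← hje]
  exact this
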